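/- Let k be a positive integer, let M > 0 be a real number, let x be a real number with 0 ≤ x ≤ kM, let J be uniformly distributed on {1,…,k}, and let X := min(M, x/J). Then E[(X − E[X])²] ≤ 2·(E[X])² + (1 + π²/6)·M·x/k. -/

import Mathlib

open Real

lemma tele (m : ℕ) (hm : 1 ≤ m) (k : ℕ) :
    ∑ j ∈ Finset.Icc (m+1) k, (1:ℝ)/(j:ℝ)^2 ≤ 1 / m := by
  have hm' : (0:ℝ) < m := by exact_mod_cast hm
  have key : ∀ n, m ≤ n → ∑ j ∈ Finset.Icc (m+1) n, (1:ℝ)/(j:ℝ)^2 ≤ 1/m - 1/n := by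
    intro n hn
    induction n with
    | zero => omega
    | succ n ih =>
      rcases Nat.eq_or_lt_of_le hn with h1 | h1
      · rw [← h1, Finset.Icc_eq_empty (by omega)]
        simp
      · have hn' : m ≤ n := by omega
        have hnn : (0:ℝ) < n := by exact_mod_cast (by omega : 0 < n)
        rw [Finset.sum_Icc_succ_top (by omega : m+1 ≤ n+1)]
        have h2 : (0:ℝ) < (n:ℝ)+1 := by linarith
        have h3 : (1:ℝ)/((n:ℝ)+1)^2 ≤ 1/n - 1/(n+1) := by
          rw [div_sub_div _ _ (ne_of_gt hnn) (ne_of_gt h2)]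
          rw [div_le_div_iff₀ (by positivity) (by positivity)]
          ring_nf
          nlinarith
        have := ih hn'
        push_cast
        push_cast at this h3
        linarith
  rcases le_or_gt k m with h | h
  · rw [Finset.Icc_eq_empty (by omega)]
    simp only [Finset.sum_empty]
    positivity
  · have hk' : (0:ℝ) < k := by exact_mod_cast (by omega : 0 < k)
    have h1 := key k (by omega)
    have h2 : (0:ℝ) < 1/k := by positivity
    linarith

lemma basel_partial (k : ℕ) : ∑ j ∈ Finset.Icc 1 k, (1:ℝ)/(j:ℝ)^2 ≤ π^2/6 :=
  sum_le_hasSum (Finset.Icc 1 k) (fun i _ => by positivity) hasSum_zeta_two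

lemma keyL (m k : ℕ) :
    ((m:ℝ)+1) * ∑ j ∈ Finset.Icc (m+1) k, (1:ℝ)/(j:ℝ)^2 ≤ π^2/6 := by
  have hpi : (3:ℝ) < π := pi_gt_three
  match m with
  | 0 => simpa using basel_partial k
  | 1 =>
    have hpi2 : π < 3.15 := pi_lt_d2
    rcases le_or_gt k 1 with h | h
    · rw [Finset.Icc_eq_empty (by omega)]
      simp
      nlinarith
    · have hsplit : ∑ j ∈ Finset.Icc 1 k, (1:ℝ)/(j:ℝ)^2
          = 1 + ∑ j ∈ Finset.Icc 2 k, (1:ℝ)/(j:ℝ)^2 := by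
        rw [Finset.Icc_eq_cons_Ioc (by omega : 1 ≤ k), Finset.sum_cons,
          ← Finset.Icc_add_one_left_eq_Ioc]
        norm_num
      have hb := basel_partial k
      rw [hsplit] at hb
      push_cast
      nlinarith
  | (n+2) =>
    have ht := tele (n+2) (by omega) k
    have hs : (0:ℝ) ≤ ∑ j ∈ Finset.Icc (n+2+1) k, (1:ℝ)/(j:ℝ)^2 := by
      apply Finset.sum_nonneg; intro i _; positivity
    have hn2 : (0:ℝ) < (n:ℝ)+2 := by positivity
    push_cast at ht ⊢
    calc ((n:ℝ)+2+1) * ∑ j ∈ Finset.Icc (n+2+1) k, (1:ℝ)/(j:ℝ)^2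
        ≤ ((n:ℝ)+2+1) * (1/((n:ℝ)+2)) :=
          mul_le_mul_of_nonneg_left ht (by positivity)
      _ ≤ 3/2 := by
          rw [mul_one_div, div_le_div_iff₀ hn2 (by norm_num)]
          linarith
      _ ≤ π^2/6 := by nlinarith


/-- For J uniform on {1,…,k} and X = min(M, x/J) with 0 ≤ x ≤ kM, writing
E[X] = (1/k)·∑_{j=1}^{k} min(M, x/j), the variance
E[(X − E[X])²] = (1/k)·∑_{j=1}^{k} (min(M, x/j) − E[X])² satisfies
E[(X − E[X])²] ≤ 2·(E[X])² + (1 + π²/6)·M·x/k. -/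
theorem stmt19 (k : ℕ) (hk : 1 ≤ k) (M x : ℝ) (hM : 0 < M)
    (hx0 : 0 ≤ x) (hxk : x ≤ k * M) (EX : ℝ)
    (hEX : EX = (∑ j ∈ Finset.Icc 1 k, min M (x / (j : ℝ))) / k) :
    (∑ j ∈ Finset.Icc 1 k, (min M (x / (j : ℝ)) - EX) ^ 2) / k ≤
      2 * EX ^ 2 + (1 + π ^ 2 / 6) * M * x / k := by
  have hk0 : (0:ℝ) < k := by exact_mod_cast hk
  set a : ℕ → ℝ := fun j => min M (x / (j:ℝ)) with ha
  have hsum : ∑ j ∈ Finset.Icc 1 k, a j = k * EX := by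
    rw [hEX]; field_simp
  -- Step 1
  have step1 : ∑ j ∈ Finset.Icc 1 k, (a j - EX)^2 ≤ ∑ j ∈ Finset.Icc 1 k, (a j)^2 := by
    have expand : ∑ j ∈ Finset.Icc 1 k, (a j - EX)^2
        = ∑ j ∈ Finset.Icc 1 k, (a j)^2 - 2*EX*(∑ j ∈ Finset.Icc 1 k, a j)
          + (Finset.Icc 1 k).card * EX^2 := by
      have hpt : ∀ j ∈ Finset.Icc 1 k, (a j - EX)^2 = (a j)^2 - (2*EX)*a j + EX^2 :=
        fun j _ => by ring
      rw [Finset.sum_congr rfl hpt, Finset.sum_add_distrib,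
        Finset.sum_sub_distrib, Finset.sum_const, ← Finset.mul_sum, nsmul_eq_mul]
      try ring
    rw [expand, hsum, Nat.card_Icc]
    have : ((k + 1 - 1 : ℕ) : ℝ) = (k:ℝ) := by push_cast [Nat.add_sub_cancel]; ring
    rw [this]
    nlinarith [sq_nonneg EX, hk0]
  -- Step 2
  set m := ⌊x / M⌋₊ with hm
  have hxM : 0 ≤ x / M := by positivity
  have step2 : ∑ j ∈ Finset.Icc 1 k, (a j)^2 ≤ (1 + π^2/6) * M * x := by
    rw [← Finset.sum_filter_add_sum_filter_not (Finset.Icc 1 k) (fun j => j ≤ m)]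
    have partA : ∑ j ∈ (Finset.Icc 1 k).filter (fun j => j ≤ m), (a j)^2 ≤ M * x := by
      have heq : ∀ j ∈ (Finset.Icc 1 k).filter (fun j => j ≤ m), (a j)^2 = M^2 := by
        intro j hj
        simp only [Finset.mem_filter, Finset.mem_Icc] at hj
        have hj1 : (1:ℝ) ≤ (j:ℝ) := by exact_mod_cast hj.1.1
        have hjm : (j:ℝ) ≤ x / M := le_trans (by exact_mod_cast hj.2) (Nat.floor_le hxM)
        have : M ≤ x / j := by
          rw [le_div_iff₀ (by linarith)]
          calc M * j = j * M := by ring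
            _ ≤ (x/M) * M := by nlinarith
            _ = x := by field_simp
        simp [ha, min_eq_left this]
      rw [Finset.sum_congr rfl heq, Finset.sum_const, nsmul_eq_mul]
      have hcard : ((Finset.Icc 1 k).filter (fun j => j ≤ m)).card ≤ m := by
        have hsub : (Finset.Icc 1 k).filter (fun j => j ≤ m) ⊆ Finset.Icc 1 m := by
          intro j hj
          simp only [Finset.mem_filter, Finset.mem_Icc] at hj ⊢
          exact ⟨hj.1.1, hj.2⟩
        simpa using Finset.card_le_card hsub
      have hmle : (m:ℝ) ≤ x / M := Nat.floor_le hxM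
      have hcard' : (((Finset.Icc 1 k).filter (fun j => j ≤ m)).card : ℝ) ≤ (m:ℝ) := by
        exact_mod_cast hcard
      calc (((Finset.Icc 1 k).filter (fun j => j ≤ m)).card : ℝ) * M^2
          ≤ (x/M) * M^2 := by nlinarith
        _ = M * x := by field_simp
    have partB : ∑ j ∈ (Finset.Icc 1 k).filter (fun j => ¬ j ≤ m), (a j)^2
        ≤ π^2/6 * (M * x) := by
      have hbound : ∀ j ∈ (Finset.Icc 1 k).filter (fun j => ¬ j ≤ m),
          (a j)^2 ≤ M * x * (((m:ℝ)+1) * (1/(j:ℝ)^2)) := by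
        intro j hj
        simp only [Finset.mem_filter, Finset.mem_Icc, not_le] at hj
        have hj1 : (1:ℝ) ≤ (j:ℝ) := by exact_mod_cast hj.1.1
        have hjm : x / M < (j:ℝ) := by
          have := (Nat.floor_lt hxM).mp hj.2
          exact_mod_cast this
        have hxj : x / j < M := by
          rw [div_lt_iff₀ (by linarith)]
          calc x = (x/M)*M := by field_simp
            _ < j * M := by nlinarith
            _ = M * j := by ring
        have hxj0 : 0 ≤ x / j := by positivity
        have hamin : a j = x / j := min_eq_right (le_of_lt hxj)
        have hxm1 : x < ((m:ℝ)+1) * M := by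
          have := Nat.lt_floor_add_one (x/M)
          calc x = (x/M)*M := by field_simp
            _ < ((m:ℝ)+1)*M := by nlinarith
        rw [hamin, div_pow]
        rw [div_le_iff₀ (by positivity)]
        calc x^2 = x * x := sq x
          _ ≤ x * (((m:ℝ)+1)*M) := by nlinarith
          _ = M * x * ((m:ℝ)+1) := by ring
          _ = M * x * (((m:ℝ)+1) * (1/(j:ℝ)^2)) * (j:ℝ)^2 := by
              have hthis : (1/(j:ℝ)^2) * (j:ℝ)^2 = 1 := by field_simp
              linear_combination (-(M * x * ((m:ℝ)+1))) * hthis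
      calc ∑ j ∈ (Finset.Icc 1 k).filter (fun j => ¬ j ≤ m), (a j)^2
          ≤ ∑ j ∈ (Finset.Icc 1 k).filter (fun j => ¬ j ≤ m),
              M * x * (((m:ℝ)+1) * (1/(j:ℝ)^2)) := Finset.sum_le_sum hbound
        _ = M * x * (((m:ℝ)+1) * ∑ j ∈ (Finset.Icc 1 k).filter (fun j => ¬ j ≤ m),
              (1:ℝ)/(j:ℝ)^2) := by rw [← Finset.mul_sum, ← Finset.mul_sum]
        _ ≤ M * x * (((m:ℝ)+1) * ∑ j ∈ Finset.Icc (m+1) k, (1:ℝ)/(j:ℝ)^2) := by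
            apply mul_le_mul_of_nonneg_left _ (by positivity)
            apply mul_le_mul_of_nonneg_left _ (by positivity)
            apply Finset.sum_le_sum_of_subset_of_nonneg
            · intro j hj
              simp only [Finset.mem_filter, Finset.mem_Icc, not_le] at hj ⊢
              omega
            · intro i _ _; positivity
        _ ≤ M * x * (π^2/6) := by
            apply mul_le_mul_of_nonneg_left (keyL m k) (by positivity)
        _ = π^2/6 * (M * x) := by ring
    nlinarith [partA, partB]
  -- Conclude
  have hEX2 : 0 ≤ 2 * EX^2 := by positivity
  calc (∑ j ∈ Finset.Icc 1 k, (a j - EX)^2) / k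
      ≤ ((1 + π^2/6) * M * x) / k := by
        gcongr
        exact step1.trans step2
    _ ≤ 2 * EX^2 + (1 + π^2/6) * M * x / k := by linarith
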